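/- arXiv:2104.07593 — 2 statements merged into one kernel-verified Lean document; each statement's English description precedes it below -/
import Mathlib

section
/- Let X be a complete metric space and let (γₙ) be a sequence of Lipschitz curves γₙ : [0,1] → X with uniformly bounded Lipschitz constants L = supₙ Lip(γₙ) < ∞. Suppose that for every ε > 0 there exists a compact set K ⊆ X such that the Lebesgue measure of {t ∈ [0,1] : γₙ(t) ∉ K} is at most ε for every n. Then there exists a subsequence (γ_{n_i}) converging uniformly on [0,1] to some Lipschitz curve γ : [0,1] → X. -/
open MeasureTheory Filter Set
open scoped BoundedContinuousFunction

private theorem near_compact_aux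
    {X : Type*} [MetricSpace X] [CompleteSpace X]
    (γ : ℕ → ℝ → X) (L : NNReal)
    (hLip : ∀ n, LipschitzOnWith L (γ n) (Set.Icc 0 1))
    (hK : ∀ ε : ℝ, 0 < ε → ∃ K : Set X, IsCompact K ∧
      ∀ n, volume {t ∈ Set.Icc (0:ℝ) 1 | γ n t ∉ K} ≤ ENNReal.ofReal ε)
    (ε : ℝ) (hε : 0 < ε) :
    ∃ K : Set X, IsCompact K ∧ ∀ n, ∀ t ∈ Set.Icc (0:ℝ) 1, γ n t ∈ Metric.thickening ε K := by
  set δ : ℝ := min (ε / (2*(L+1))) (1/2) with hδdef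
  have hL1 : (0:ℝ) < L + 1 := by positivity
  have hδ0 : 0 < δ := lt_min (by positivity) (by norm_num)
  obtain ⟨K, hKc, hKm⟩ := hK (δ/2) (by positivity)
  refine ⟨K, hKc, fun n t ht => ?_⟩
  obtain ⟨a, ha0, ha1, hta, hat⟩ : ∃ a : ℝ, 0 ≤ a ∧ a + δ ≤ 1 ∧ a ≤ t ∧ t ≤ a + δ := by
    rcases le_or_gt t (1/2) with h | h
    · exact ⟨t, ht.1, by nlinarith [min_le_right (ε / (2*(L+1))) (1/2:ℝ)], le_refl t, by linarith⟩
    · exact ⟨t - δ, by nlinarith [min_le_right (ε / (2*(L+1))) (1/2:ℝ)], by linarith [ht.2],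
        by linarith, by linarith⟩
  have hJsub : Set.Icc a (a+δ) ⊆ Set.Icc (0:ℝ) 1 := Set.Icc_subset_Icc ha0 ha1
  have hgood : ∃ s ∈ Set.Icc a (a+δ), γ n s ∈ K := by
    by_contra hcon
    push_neg at hcon
    have hsub : Set.Icc a (a+δ) ⊆ {t ∈ Set.Icc (0:ℝ) 1 | γ n t ∉ K} :=
      fun s hs => ⟨hJsub hs, hcon s hs⟩
    have := (measure_mono hsub).trans (hKm n)
    rw [Real.volume_Icc] at this
    have h2 : ENNReal.ofReal (a + δ - a) ≤ ENNReal.ofReal (δ/2) := this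
    rw [ENNReal.ofReal_le_ofReal_iff (by positivity)] at h2
    linarith
  obtain ⟨s, hs, hsK⟩ := hgood
  rw [Metric.mem_thickening_iff]
  refine ⟨γ n s, hsK, ?_⟩
  have hd := (hLip n).dist_le_mul t ht s (hJsub hs)
  have hts : dist t s ≤ δ := by
    rw [Real.dist_eq, abs_le]; constructor <;> [skip; skip] <;>
      · cases' hs with h1 h2; linarith
  have hδε : (L:ℝ) * δ ≤ ε/2 := by
    have h1 : δ ≤ ε / (2*(L+1)) := min_le_left _ _
    have h2 : (L:ℝ) * δ ≤ L * (ε / (2*(L+1))) :=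
      mul_le_mul_of_nonneg_left h1 L.coe_nonneg
    have h3 : (L:ℝ) * (ε / (2*(L+1))) ≤ ε/2 := by
      rw [← mul_div_assoc, div_le_div_iff₀ (by positivity) (by norm_num)]
      nlinarith [L.coe_nonneg]
    linarith
  calc dist (γ n t) (γ n s) ≤ L * dist t s := hd
    _ ≤ L * δ := mul_le_mul_of_nonneg_left hts L.coe_nonneg
    _ < ε := by linarith

/-- Arzelà–Ascoli revisited: a sequence of uniformly Lipschitz curves `[0,1] → X`
whose values lie, up to a set of measure `≤ ε`, in a compact set, has a uniformly
converging subsequence. -/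
theorem arzela_ascoli_revisited
    {X : Type*} [MetricSpace X] [CompleteSpace X]
    (γ : ℕ → ℝ → X) (L : NNReal)
    (hLip : ∀ n, LipschitzOnWith L (γ n) (Set.Icc 0 1))
    (hK : ∀ ε : ℝ, 0 < ε → ∃ K : Set X, IsCompact K ∧
      ∀ n, volume {t ∈ Set.Icc (0:ℝ) 1 | γ n t ∉ K} ≤ ENNReal.ofReal ε) :
    ∃ φ : ℕ → ℕ, StrictMono φ ∧ ∃ g : ℝ → X,
      LipschitzOnWith L g (Set.Icc 0 1) ∧
      TendstoUniformlyOn (fun i => γ (φ i)) g atTop (Set.Icc 0 1) := by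
  -- all values lie in a single compact set
  set S : Set X := ⋃ n, γ n '' Set.Icc 0 1 with hSdef
  have hTB : TotallyBounded S := by
    rw [Metric.totallyBounded_iff]
    intro ε hε
    obtain ⟨K, hKc, hKth⟩ := near_compact_aux γ L hLip hK (ε/2) (by positivity)
    obtain ⟨t, htfin, htcov⟩ :=
      (Metric.totallyBounded_iff.mp hKc.totallyBounded) (ε/2) (by positivity)
    refine ⟨t, htfin, fun x hx => ?_⟩
    obtain ⟨_, ⟨n, rfl⟩, s, hs, rfl⟩ := hx
    obtain ⟨k, hk, hdk⟩ := Metric.mem_thickening_iff.mp (hKth n s hs)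
    obtain ⟨y, hy⟩ := Set.mem_iUnion₂.mp (htcov hk)
    refine Set.mem_iUnion₂.mpr ⟨y, hy.1, ?_⟩
    have := Metric.mem_ball.mp hy.2
    exact Metric.mem_ball.mpr (lt_of_le_of_lt (dist_triangle _ k y) (by linarith))
  set C : Set X := closure S with hCdef
  have hCc : IsCompact C := TotallyBounded.isCompact_of_isClosed hTB.closure isClosed_closure
  have hmemC : ∀ n, ∀ t : Set.Icc (0:ℝ) 1, γ n t ∈ C :=
    fun n t => subset_closure (Set.mem_iUnion.mpr ⟨n, Set.mem_image_of_mem _ t.2⟩)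
  -- the curves as bounded continuous functions on the compact interval
  have hLipR : ∀ n, LipschitzWith L ((Set.Icc (0:ℝ) 1).restrict (γ n)) :=
    fun n => LipschitzOnWith.to_restrict (hLip n)
  let f : ℕ → (Set.Icc (0:ℝ) 1 →ᵇ X) := fun n =>
    BoundedContinuousFunction.mkOfCompact ⟨(Set.Icc (0:ℝ) 1).restrict (γ n), (hLipR n).continuous⟩
  -- equicontinuity
  have heq : Equicontinuous ((↑) : Set.range f → Set.Icc (0:ℝ) 1 → X) := by
    apply Metric.equicontinuous_of_continuity_modulus (fun r => L * r)
    · have : Tendsto (fun r : ℝ => (L:ℝ) * r) (nhds 0) (nhds ((L:ℝ) * 0)) :=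
        (tendsto_id.const_mul _)
      simpa using this
    · rintro x y ⟨F, ⟨n, rfl⟩⟩
      exact (hLipR n).dist_le_mul x y
  have hcl : IsCompact (closure (Set.range f)) :=
    BoundedContinuousFunction.arzela_ascoli C hCc (Set.range f)
      (by rintro F x ⟨n, rfl⟩; exact hmemC n x) heq
  obtain ⟨F, -, φ, hφ, hconv⟩ :=
    hcl.tendsto_subseq (fun n => subset_closure (Set.mem_range_self n))
  refine ⟨φ, hφ, fun t => F (Set.projIcc 0 1 zero_le_one t), ?_, ?_⟩
  · -- Lipschitz as a pointwise limit
    apply LipschitzOnWith.of_dist_le_mul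
    intro x hx y hy
    rw [Set.projIcc_of_mem zero_le_one hx, Set.projIcc_of_mem zero_le_one hy]
    have key : ∀ i, dist (F ⟨x, hx⟩) (F ⟨y, hy⟩) ≤
        2 * dist (f (φ i)) F + L * dist x y := by
      intro i
      have h1 : dist (F ⟨x, hx⟩) (f (φ i) ⟨x, hx⟩) ≤ dist (f (φ i)) F := by
        rw [dist_comm (f (φ i)) F]
        exact BoundedContinuousFunction.dist_coe_le_dist _
      have h2 : dist (f (φ i) ⟨y, hy⟩) (F ⟨y, hy⟩) ≤ dist (f (φ i)) F :=
        BoundedContinuousFunction.dist_coe_le_dist _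
      have h3 : dist (f (φ i) ⟨x, hx⟩) (f (φ i) ⟨y, hy⟩) ≤ L * dist x y := by
        have := (hLipR (φ i)).dist_le_mul ⟨x, hx⟩ ⟨y, hy⟩
        exact this
      calc dist (F ⟨x, hx⟩) (F ⟨y, hy⟩)
          ≤ dist (F ⟨x, hx⟩) (f (φ i) ⟨x, hx⟩) + dist (f (φ i) ⟨x, hx⟩) (f (φ i) ⟨y, hy⟩)
            + dist (f (φ i) ⟨y, hy⟩) (F ⟨y, hy⟩) := dist_triangle4 _ _ _ _
        _ ≤ 2 * dist (f (φ i)) F + L * dist x y := by linarith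
    have hlim : Tendsto (fun i => 2 * dist (f (φ i) : Set.Icc (0:ℝ) 1 →ᵇ X) F + (L:ℝ) * dist x y)
        atTop (nhds ((L:ℝ) * dist x y)) := by
      have : Tendsto (fun i => dist ((f ∘ φ) i) F) atTop (nhds 0) :=
        (tendsto_iff_dist_tendsto_zero.mp hconv)
      have h := (this.const_mul (2:ℝ)).add (tendsto_const_nhds (x := (L:ℝ) * dist x y) (f := atTop))
      simpa using h
    exact ge_of_tendsto hlim (Eventually.of_forall key)
  · -- uniform convergence
    rw [tendstoUniformlyOn_iff_tendstoUniformly_comp_coe]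
    have : TendstoUniformly (fun i => ⇑(f (φ i))) (⇑F) atTop :=
      BoundedContinuousFunction.tendsto_iff_tendstoUniformly.mp hconv
    have hgF : ((fun t => F (Set.projIcc 0 1 zero_le_one t)) ∘ ((↑) : Set.Icc (0:ℝ) 1 → ℝ)) = ⇑F := by
      funext x
      simp [Set.projIcc_of_mem zero_le_one x.2]
    rw [hgF]
    exact this
end

section
/- Let (aₙ)ₙ be a non-increasing sequence of non-negative real numbers with ∑ₙ aₙ < ∞, and let m > 0 satisfy m ≤ ∑ₙ aₙ. Then there exist indices 1 ≤ n₁ < n₂ < ⋯ < n_p (possibly p = 1, and n_p possibly infinite) such that aₙ ≥ m for all n ≤ n₁, m/2 ≤ ∑_{n = n_j + 1}^{n_{j+1}} aₙ ≤ m for every j = 1, …, p−1, and ∑_{n > n_p} aₙ ≤ m/2. -/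
open scoped ENNReal

open Classical in
private noncomputable def nextCut (a : ℕ → ℝ) (m : ℝ) (c : ℕ) : ℕ :=
  if h : ∃ k, m / 2 ≤ ∑ n ∈ Finset.Ioc c k, a n then Nat.find h else c

private theorem nextCut_spec {a : ℕ → ℝ} {m : ℝ} {c : ℕ}
    (h : ∃ k, m / 2 ≤ ∑ n ∈ Finset.Ioc c k, a n) :
    m / 2 ≤ ∑ n ∈ Finset.Ioc c (nextCut a m c), a n ∧
      ∀ k < nextCut a m c, ∑ n ∈ Finset.Ioc c k, a n < m / 2 := by
  classical
  unfold nextCut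
  rw [dif_pos h]
  exact ⟨Nat.find_spec h, fun k hk => lt_of_not_ge (Nat.find_min h hk)⟩

private theorem lt_nextCut {a : ℕ → ℝ} {m : ℝ} {c : ℕ} (hm : 0 < m)
    (h : ∃ k, m / 2 ≤ ∑ n ∈ Finset.Ioc c k, a n) : c < nextCut a m c := by
  by_contra hc
  push_neg at hc
  have := (nextCut_spec h).1
  rw [Finset.Ioc_eq_empty (by omega), Finset.sum_empty] at this
  linarith

private theorem le_nextCut {a : ℕ → ℝ} {m : ℝ} {c : ℕ} (hm : 0 < m) :
    c ≤ nextCut a m c := by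
  classical
  unfold nextCut
  split
  · exact (lt_nextCut hm (by assumption)).le.trans (by
      unfold nextCut; rw [dif_pos (by assumption)])
  · exact le_rfl

private noncomputable def cuts (a : ℕ → ℝ) (m : ℝ) : ℕ → ℕ
  | 0 => sSup {n | 1 ≤ n ∧ m ≤ a n}
  | k + 1 => nextCut a m (cuts a m k)

private theorem tsum_ioc (a : ℕ → ℝ) (c d : ℕ) :
    (∑' n : {n : ℕ // (c : ℕ∞) < (n : ℕ∞) ∧ (n : ℕ∞) ≤ (d : ℕ∞)}, a n)
      = ∑ n ∈ Finset.Ioc c d, a n := by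
  rw [tsum_congr_subtype a (Q := fun n => n ∈ Finset.Ioc c d)
    (by intro n; simp [Nat.cast_lt, Nat.cast_le])]
  exact Finset.tsum_subtype _ a

private theorem tail_le (a : ℕ → ℝ) (ha : ∀ n, 0 ≤ a n) (hsum : Summable a) (c : ℕ) (x : ℝ)
    (h : ∀ k, ∑ n ∈ Finset.Ioc c k, a n ≤ x) :
    (∑' n : {n : ℕ // (c : ℕ∞) < (n : ℕ∞)}, a n) ≤ x := by
  rw [tsum_congr_subtype a (Q := fun n => n ∈ Set.Ioi c)
    (by intro n; simp [Nat.cast_lt])]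
  apply Summable.tsum_le_of_sum_le (hsum.subtype _)
  intro s
  have hs : ∑ i ∈ s, a ↑i = ∑ n ∈ s.image Subtype.val, a n := by
    rw [Finset.sum_image (by intro x _ y _ h; exact Subtype.ext h)]
  rw [show (fun i : Set.Ioi c => (a ∘ Subtype.val) i) = fun i : Set.Ioi c => a ↑i from rfl, hs]
  refine le_trans (Finset.sum_le_sum_of_subset_of_nonneg
    (show s.image Subtype.val ⊆ Finset.Ioc c ((s.image Subtype.val).sup id) from ?_)
    (fun i _ _ => ha i)) (h _)
  intro n hn
  simp only [Finset.mem_image] at hn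
  obtain ⟨⟨n', hn'⟩, hmem, rfl⟩ := hn
  exact Finset.mem_Ioc.2 ⟨hn', Finset.le_sup (f := id)
    (by simp only [Finset.mem_image]; exact ⟨⟨n', hn'⟩, hmem, rfl⟩)⟩

/-- Grouping the terms of a non-increasing non-negative summable sequence into blocks:
there are cut points `c 1 < c 2 < ⋯ < c p` (the last one possibly infinite) such that all
terms with index `≤ c 1` are `≥ m`, each intermediate block has sum between `m/2` and `m`,
and the tail beyond `c p` has sum at most `m/2`. -/
theorem grouping_small_components
    (a : ℕ → ℝ) (ha : ∀ n, 0 ≤ a n)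
    (hmono : ∀ i j, i ≤ j → a j ≤ a i)
    (hsum : Summable a)
    (m : ℝ) (hm : 0 < m) (hle : m ≤ ∑' n, a n) :
    ∃ p : ℕ, 1 ≤ p ∧ ∃ c : ℕ → ℕ∞,
      (∀ j, 1 ≤ j → j < p → c j < c (j + 1)) ∧
      (∀ j, 1 ≤ j → j < p → c j ≠ ⊤) ∧
      (∀ n : ℕ, 1 ≤ n → (n : ℕ∞) ≤ c 1 → m ≤ a n) ∧
      (∀ j, 1 ≤ j → j < p →
        m / 2 ≤ (∑' n : {n : ℕ // c j < (n : ℕ∞) ∧ (n : ℕ∞) ≤ c (j + 1)}, a n) ∧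
        (∑' n : {n : ℕ // c j < (n : ℕ∞) ∧ (n : ℕ∞) ≤ c (j + 1)}, a n) ≤ m) ∧
      (∑' n : {n : ℕ // c p < (n : ℕ∞)}, a n) ≤ m / 2 := by
  classical
  set S := ∑' n, a n with hS
  -- the head set is bounded above
  obtain ⟨N, hN⟩ : ∃ N, ∀ n, N ≤ n → a n < m := by
    have := hsum.tendsto_atTop_zero
    have := this.eventually (gt_mem_nhds hm)
    rcases Filter.eventually_atTop.1 this with ⟨N, hN⟩
    exact ⟨N, hN⟩
  have hbdd : BddAbove {n | 1 ≤ n ∧ m ≤ a n} := by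
    refine ⟨N, fun n hn => ?_⟩
    by_contra hc
    push_neg at hc
    exact absurd hn.2 (not_le.2 (hN n hc.le))
  set c1 : ℕ := sSup {n | 1 ≤ n ∧ m ≤ a n} with hc1
  have h1 : ∀ n, 1 ≤ n → n ≤ c1 → m ≤ a n := by
    intro n hn1 hnc1
    by_cases hne : ({n | 1 ≤ n ∧ m ≤ a n} : Set ℕ).Nonempty
    · have hc1mem := Nat.sSup_mem hne hbdd
      exact le_trans hc1mem.2 (hmono n c1 hnc1)
    · rw [Set.not_nonempty_iff_eq_empty] at hne
      rw [hc1, hne, csSup_empty] at hnc1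
      simp at hnc1
      omega
  have h2 : ∀ n, c1 < n → a n < m := by
    intro n hn
    by_contra hc
    push_neg at hc
    have : n ≤ c1 := le_csSup hbdd ⟨by omega, hc⟩
    omega
  set G : ℕ → ℕ := cuts a m with hG
  have hG0 : G 0 = c1 := rfl
  have hGsucc : ∀ k, G (k + 1) = nextCut a m (G k) := fun k => rfl
  have hGle : ∀ k, G k ≤ G (k + 1) := fun k => (hGsucc k) ▸ le_nextCut hm
  have hGmono : Monotone G := monotone_nat_of_le_succ hGle
  have hGc1 : ∀ k, c1 ≤ G k := fun k => hG0 ▸ hGmono (Nat.zero_le k)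
  -- the upper bound for blocks
  have hub : ∀ c, c1 ≤ c → (∃ k, m / 2 ≤ ∑ n ∈ Finset.Ioc c k, a n) →
      ∑ n ∈ Finset.Ioc c (nextCut a m c), a n ≤ m := by
    intro c hc h
    set k := nextCut a m c with hk
    have hck : c < k := lt_nextCut hm h
    have hsplit : ∑ n ∈ Finset.Ioc c k, a n = ∑ n ∈ Finset.Ioc c (k - 1), a n + a k := by
      have h1' : c ≤ k - 1 := by omega
      have := Finset.sum_Ioc_succ_top h1' a
      rwa [show k - 1 + 1 = k by omega] at this
    have hsmall : ∑ n ∈ Finset.Ioc c (k - 1), a n < m / 2 :=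
      (nextCut_spec h).2 (k - 1) (by omega)
    rcases eq_or_lt_of_le (show c + 1 ≤ k by omega) with heq | hlt
    · rw [hsplit, show k - 1 = c by omega, Finset.Ioc_self, Finset.sum_empty, zero_add]
      exact (h2 k (by omega)).le
    · have hk1 : a k ≤ ∑ n ∈ Finset.Ioc c (k - 1), a n := by
        have hmem : k - 1 ∈ Finset.Ioc c (k - 1) := Finset.mem_Ioc.2 ⟨by omega, le_rfl⟩
        calc a k ≤ a (k - 1) := hmono (k - 1) k (by omega)
          _ ≤ ∑ n ∈ Finset.Ioc c (k - 1), a n :=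
            Finset.single_le_sum (fun i _ => ha i) hmem
      rw [hsplit]
      linarith
  -- termination
  have hstop : ∃ k, ¬ ∃ k', m / 2 ≤ ∑ n ∈ Finset.Ioc (G k) k', a n := by
    by_contra hno
    push_neg at hno
    have hblocks : ∀ J : ℕ, (J : ℝ) * (m / 2) ≤ ∑ n ∈ Finset.Ioc (G 0) (G J), a n := by
      intro J
      induction J with
      | zero => simp
      | succ J ih =>
        have hsplit := Finset.sum_Ioc_consecutive a (hGmono (Nat.zero_le J)) (hGle J)
        have hblock : m / 2 ≤ ∑ n ∈ Finset.Ioc (G J) (G (J + 1)), a n := by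
          rw [hGsucc J]
          exact (nextCut_spec (hno J)).1
        push_cast
        rw [← hsplit]
        linarith
    obtain ⟨J, hJ⟩ := exists_nat_gt (S / (m / 2))
    have hJS : S < (J : ℝ) * (m / 2) := by
      rwa [div_lt_iff₀ (by linarith)] at hJ
    have : ∑ n ∈ Finset.Ioc (G 0) (G J), a n ≤ S :=
      Summable.sum_le_tsum _ (fun i _ => ha i) hsum
    linarith [hblocks J]
  set K := Nat.find hstop with hK
  have hKspec : ∀ k', ∑ n ∈ Finset.Ioc (G K) k', a n < m / 2 := by
    intro k'
    by_contra hc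
    push_neg at hc
    exact Nat.find_spec hstop ⟨k', hc⟩
  have hKmin : ∀ k < K, ∃ k', m / 2 ≤ ∑ n ∈ Finset.Ioc (G k) k', a n := by
    intro k hk
    rw [hK] at hk
    have := Nat.find_min hstop hk
    push_neg at this
    exact not_not.1 (by push_neg; exact this)
  refine ⟨K + 1, by omega, fun j => ((G (j - 1) : ℕ) : ℕ∞), ?_, ?_, ?_, ?_, ?_⟩
  · intro j hj hjp
    have hlt : G (j - 1) < G j := by
      conv_rhs => rw [show j = (j - 1) + 1 by omega]
      rw [hGsucc (j - 1)]
      exact lt_nextCut hm (hKmin (j - 1) (by omega))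
    simp only [Nat.add_sub_cancel]
    exact_mod_cast hlt
  · intro j _ _
    exact ENat.coe_ne_top _
  · intro n hn hnc
    simp only at hnc
    exact h1 n hn (hG0 ▸ (by exact_mod_cast hnc : n ≤ G 0))
  · intro j hj hjp
    show m / 2 ≤ (∑' n : {n : ℕ // (G (j - 1) : ℕ∞) < (n : ℕ∞) ∧ (n : ℕ∞) ≤ (G j : ℕ∞)}, a n) ∧
      (∑' n : {n : ℕ // (G (j - 1) : ℕ∞) < (n : ℕ∞) ∧ (n : ℕ∞) ≤ (G j : ℕ∞)}, a n) ≤ m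
    rw [tsum_ioc a (G (j - 1)) (G j)]
    have hGj : G j = nextCut a m (G (j - 1)) := by
      conv_lhs => rw [show j = (j - 1) + 1 by omega]
      exact hGsucc (j - 1)
    have hex := hKmin (j - 1) (by omega)
    rw [hGj]
    exact ⟨(nextCut_spec hex).1, hub (G (j - 1)) (hGc1 _) hex⟩
  · simp only [Nat.add_sub_cancel]
    exact tail_le a ha hsum (G K) (m / 2) (fun k => (hKspec k).le)
end
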